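/- arXiv:2311.01628 — 6 statements merged into one kernel-verified Lean document; each statement's English description precedes it below -/
import Mathlib

section
/- Let U ⊆ ℝⁿ be open, let q ∈ ℝ, let y : U → ℝ be of class C² with y > 0 on U, and let φ : U → ℝ be of class C¹. Then at every point of U: y^{2q} (⟪∇y, ∇φ⟫)² ≥ div( (1/2)(1−2q) y^{2q−1} ‖∇y‖² φ² ∇y ) + (1/4)(1−2q)² y^{2q−2} ‖∇y‖⁴ φ² − (1/2)(1−2q) y^{2q−1} ( (Δy) ‖∇y‖² + 2 ⟪∇y, (∇²y) ∇y⟫ ) φ², where ∇²y denotes the Hessian of y and div the Euclidean divergence. -/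
/-- The Euclidean Laplacian of a scalar function. -/
noncomputable def lap {n : ℕ} (f : EuclideanSpace ℝ (Fin n) → ℝ)
    (x : EuclideanSpace ℝ (Fin n)) : ℝ :=
  ∑ i, fderiv ℝ (fun z => fderiv ℝ f z (EuclideanSpace.single i 1)) x (EuclideanSpace.single i 1)

/-- The Euclidean divergence of a vector field. -/
noncomputable def diverg {n : ℕ}
    (V : EuclideanSpace ℝ (Fin n) → EuclideanSpace ℝ (Fin n))
    (x : EuclideanSpace ℝ (Fin n)) : ℝ :=
  ∑ i, fderiv ℝ V x (EuclideanSpace.single i 1) i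

open InnerProductSpace in
set_option maxHeartbeats 1000000 in
/-- The pointwise Hardy-type inequality (Proposition 2.8): for `y > 0` of class `C²` and
`φ` of class `C¹` on an open set `U`, at every point of `U` one has
`y^{2q} (⟪∇y,∇φ⟫)² ≥ div((1/2)(1-2q) y^{2q-1} ‖∇y‖² φ² ∇y)
  + (1/4)(1-2q)² y^{2q-2} ‖∇y‖⁴ φ²
  - (1/2)(1-2q) y^{2q-1} ((Δy)‖∇y‖² + 2⟪∇y,(∇²y)∇y⟫) φ²`. -/
theorem stmt_7 (n : ℕ) (U : Set (EuclideanSpace ℝ (Fin n))) (hU : IsOpen U)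
    (q : ℝ) (y φ : EuclideanSpace ℝ (Fin n) → ℝ)
    (hy : ContDiffOn ℝ 2 y U) (hypos : ∀ x ∈ U, 0 < y x)
    (hφ : ContDiffOn ℝ 1 φ U) :
    ∀ x ∈ U,
      (y x) ^ (2*q) * (inner ℝ (gradient y x) (gradient φ x) : ℝ)^2 ≥
        diverg (fun z =>
            ((1/2) * (1 - 2*q) * (y z) ^ (2*q - 1) * ‖gradient y z‖^2 * (φ z)^2)
              • gradient y z) x
        + (1/4) * (1 - 2*q)^2 * (y x) ^ (2*q - 2) * ‖gradient y x‖^4 * (φ x)^2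
        - (1/2) * (1 - 2*q) * (y x) ^ (2*q - 1) *
            (lap y x * ‖gradient y x‖^2
              + 2 * fderiv ℝ (fun z => fderiv ℝ y z (gradient y x)) x (gradient y x))
            * (φ x)^2 := by
  intro x hx
  have hnx : U ∈ nhds x := hU.mem_nhds hx
  have hyx : ContDiffAt ℝ 2 y x := hy.contDiffAt hnx
  have hyd : DifferentiableAt ℝ y x := hyx.differentiableAt two_ne_zero
  have hφd : DifferentiableAt ℝ φ x := (hφ.contDiffAt hnx).differentiableAt one_ne_zero
  have hFd : DifferentiableAt ℝ (fderiv ℝ y) x :=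
    (hyx.fderiv_right le_rfl).differentiableAt one_ne_zero
  set D := fderiv ℝ (fderiv ℝ y) x with hDdef
  have hDF : HasFDerivAt (fderiv ℝ y) D x := hFd.hasFDerivAt
  -- gradient is differentiable
  have hg0 : HasFDerivAt (gradient y)
      ((InnerProductSpace.toDual ℝ (EuclideanSpace ℝ (Fin n))).symm.toContinuousLinearEquiv.toContinuousLinearMap.comp D) x :=
    ((InnerProductSpace.toDual ℝ (EuclideanSpace ℝ (Fin n))).symm.toContinuousLinearEquiv.toContinuousLinearMap.hasFDerivAt).comp x hDF
  set Dg := fderiv ℝ (gradient y) x with hDgdef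
  have hg : HasFDerivAt (gradient y) Dg x := hg0.differentiableAt.hasFDerivAt
  have hgi : ∀ v : EuclideanSpace ℝ (Fin n), (inner ℝ (gradient y x) v : ℝ) = fderiv ℝ y x v :=
    fun v => InnerProductSpace.toDual_symm_apply
  have hφi : ∀ v : EuclideanSpace ℝ (Fin n), (inner ℝ (gradient φ x) v : ℝ) = fderiv ℝ φ x v :=
    fun v => InnerProductSpace.toDual_symm_apply
  have hDgi : ∀ v w : EuclideanSpace ℝ (Fin n), (inner ℝ (Dg v) w : ℝ) = D v w := by
    intro v w
    rw [hDgdef, hg0.fderiv]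
    exact InnerProductSpace.toDual_symm_apply
  have hcoord : ∀ (w : EuclideanSpace ℝ (Fin n)) i,
      w i = (inner ℝ w (EuclideanSpace.single i (1:ℝ)) : ℝ) := by
    intro w i
    rw [real_inner_comm]
    simp [EuclideanSpace.inner_single_left]
  have hbasis : ∀ v : EuclideanSpace ℝ (Fin n), ∑ i, v i • EuclideanSpace.single i (1:ℝ) = v := by
    intro v
    refine PiLp.ext fun j => ?_
    rw [WithLp.ofLp_sum, Finset.sum_apply j Finset.univ _]
    simp [EuclideanSpace.single_apply]
  -- Hessian facts
  have hH : ∀ w : EuclideanSpace ℝ (Fin n), fderiv ℝ (fun z => fderiv ℝ y z w) x =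
      (fderiv ℝ y x).comp (0 : EuclideanSpace ℝ (Fin n) →L[ℝ] EuclideanSpace ℝ (Fin n)) + D.flip w :=
    fun w => (hDF.clm_apply (hasFDerivAt_const w x)).fderiv
  have hlap : lap y x = ∑ i, D (EuclideanSpace.single i (1:ℝ)) (EuclideanSpace.single i (1:ℝ)) := by
    unfold lap
    refine Finset.sum_congr rfl fun i _ => ?_
    rw [hH]
    simp
  have hHess : fderiv ℝ (fun z => fderiv ℝ y z (gradient y x)) x (gradient y x)
      = D (gradient y x) (gradient y x) := by
    rw [hH (gradient y x)]; simp
  -- key divergence formula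
  have key : ∀ (h : EuclideanSpace ℝ (Fin n) → ℝ) (Dh : EuclideanSpace ℝ (Fin n) →L[ℝ] ℝ),
      HasFDerivAt h Dh x →
      diverg (fun z => h z • gradient y z) x = Dh (gradient y x) + h x * lap y x := by
    intro h Dh hh
    have hV := (hh.smul hg).fderiv
    unfold diverg
    rw [show (fun z => h z • gradient y z) = h • gradient y from rfl, hV]
    have step : ∀ i : Fin n,
        ((h x • Dg + Dh.smulRight (gradient y x)) (EuclideanSpace.single i (1:ℝ))) i
        = h x * D (EuclideanSpace.single i (1:ℝ)) (EuclideanSpace.single i (1:ℝ))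
          + (gradient y x) i * Dh (EuclideanSpace.single i (1:ℝ)) := by
      intro i
      simp only [ContinuousLinearMap.add_apply, ContinuousLinearMap.smul_apply,
        ContinuousLinearMap.smulRight_apply, PiLp.add_apply, PiLp.smul_apply, smul_eq_mul]
      rw [hcoord (Dg _) i, hDgi]
      ring
    rw [Finset.sum_congr rfl fun i _ => step i, Finset.sum_add_distrib, ← Finset.mul_sum, ← hlap]
    have hDhsum : ∑ i, (gradient y x) i * Dh (EuclideanSpace.single i (1:ℝ)) = Dh (gradient y x) := by
      conv_rhs => rw [← hbasis (gradient y x)]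
      rw [map_sum]
      exact Finset.sum_congr rfl fun i _ => by rw [map_smul, smul_eq_mul]
    rw [hDhsum]
    ring
  -- scalar derivative pieces
  have hy' : HasFDerivAt y (fderiv ℝ y x) x := hyd.hasFDerivAt
  have hφ' : HasFDerivAt φ (fderiv ℝ φ x) x := hφd.hasFDerivAt
  have ha : 0 < y x := hypos x hx
  have hr : HasFDerivAt (fun z => y z ^ (2*q - 1))
      (((2*q - 1) * y x ^ (2*q - 1 - 1)) • fderiv ℝ y x) x :=
    hy'.rpow_const (Or.inl ha.ne')
  have hN : HasFDerivAt (fun z => ‖gradient y z‖^2)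
      ((fderivInnerCLM ℝ (gradient y x, gradient y x)).comp (Dg.prod Dg)) x := by
    simpa only [real_inner_self_eq_norm_sq] using hg.inner ℝ hg
  have hφ2 : HasFDerivAt (fun z => φ z ^ 2) (((2:ℕ) * φ x ^ (2 - 1)) • fderiv ℝ φ x) x :=
    (hasDerivAt_pow 2 (φ x)).comp_hasFDerivAt x hφ'
  have h0 := hr.const_mul (1/2 * (1 - 2*q))
  have h1 := h0.mul hN
  have h2 := h1.mul hφ2
  have hdiv := key (fun z => (1/2) * (1 - 2*q) * (y z) ^ (2*q - 1) * ‖gradient y z‖^2 * (φ z)^2) _ h2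
  rw [hdiv, hHess]
  simp only [ContinuousLinearMap.add_apply, ContinuousLinearMap.smul_apply, smul_eq_mul,
    fderivInnerCLM_apply, ContinuousLinearMap.comp_apply, ContinuousLinearMap.prod_apply, Pi.mul_apply]
  have e1 : fderiv ℝ y x (gradient y x) = ‖gradient y x‖^2 := by
    rw [← hgi]; exact real_inner_self_eq_norm_sq _
  have e2 : (inner ℝ (Dg (gradient y x)) (gradient y x) : ℝ) = D (gradient y x) (gradient y x) :=
    hDgi _ _
  have e3 : (inner ℝ (gradient y x) (Dg (gradient y x)) : ℝ) = D (gradient y x) (gradient y x) := by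
    rw [real_inner_comm]; exact hDgi _ _
  have e4 : (inner ℝ (gradient y x) (gradient φ x) : ℝ) = fderiv ℝ φ x (gradient y x) := by
    rw [real_inner_comm]; exact hφi _
  rw [e1, e2, e3, e4]
  have hq0 : y x ^ (2*q - 1 - 1) = y x ^ (2*q - 2) := by
    rw [show (2*q - 1 - 1) = 2*q - 2 by ring]
  have hq1 : y x ^ (2*q - 1) = y x ^ (2*q - 2) * y x := by
    rw [show (2*q - 1) = (2*q - 2) + 1 by ring, Real.rpow_add ha, Real.rpow_one]
  have hq2 : y x ^ (2*q) = y x ^ (2*q - 2) * y x * y x := by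
    have h2' : y x ^ ((2*q - 2) + 2) = y x ^ (2*q - 2) * y x ^ (2:ℝ) := Real.rpow_add ha _ _
    have e : ((2*q - 2) + 2 : ℝ) = 2*q := by ring
    rw [e] at h2'
    rw [h2', show (2:ℝ) = ((2:ℕ):ℝ) by norm_num, Real.rpow_natCast]
    ring
  have hT : (0:ℝ) ≤ y x ^ (2*q - 2) := (Real.rpow_pos_of_pos ha _).le
  rw [hq0, hq1, hq2]
  have h4 : ‖gradient y x‖^4 = ‖gradient y x‖^2 * ‖gradient y x‖^2 := by ring
  rw [h4]
  norm_num
  set A := y x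
  set T := A ^ (2*q - 2) with hTdef
  set G := ‖gradient y x‖^2 with hGdef
  set P := fderiv ℝ φ x (gradient y x) with hPdef
  set s := φ x with hsdef
  set L := lap y x with hLdef
  set Hs := D (gradient y x) (gradient y x) with hHsdef
  nlinarith [mul_nonneg hT (sq_nonneg (A * P - 1/2 * (1 - 2*q) * G * s))]
end

section
/- Let U ⊆ ℝⁿ be open, let q, b ∈ ℝ, let y : U → ℝ be of class C² with y > 0 on U, and let φ : U → ℝ be of class C¹. Then at every point of U: ( y^q ⟪∇y,∇φ⟫ + b y^{q−1} ‖∇y‖² φ )² = y^{2q} (⟪∇y,∇φ⟫)² + b(b−2q+1) y^{2q−2} ‖∇y‖⁴ φ² − 2b y^{2q−1} ⟪∇y, (∇²y)∇y⟫ φ² − b y^{2q−1} (Δy) ‖∇y‖² φ² + div( b y^{2q−1} ‖∇y‖² φ² ∇y ). -/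
section aux

variable {n : ℕ}

/-- Basis decomposition in Euclidean space. -/
lemma euclid_decomp (G : EuclideanSpace ℝ (Fin n)) :
    G = ∑ i, G i • EuclideanSpace.single i 1 := by
  ext j
  rw [WithLp.ofLp_sum, Finset.sum_apply]
  simp [EuclideanSpace.single_apply]

/-- Inner product with a gradient computes the Fréchet derivative. -/
lemma inner_gradient (f : EuclideanSpace ℝ (Fin n) → ℝ) (z v : EuclideanSpace ℝ (Fin n)) :
    (inner ℝ (gradient f z) v : ℝ) = fderiv ℝ f z v :=
  InnerProductSpace.toDual_symm_apply

/-- The inverse of the Riesz duality map, as a continuous linear map over ℝ. -/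
noncomputable def hardyT (n : ℕ) :
    (EuclideanSpace ℝ (Fin n) →L[ℝ] ℝ) →L[ℝ] EuclideanSpace ℝ (Fin n) :=
{ toFun := fun L => (InnerProductSpace.toDual ℝ (EuclideanSpace ℝ (Fin n))).symm L,
  map_add' := fun a b => by simp,
  map_smul' := fun r a => by simp,
  cont := (InnerProductSpace.toDual ℝ (EuclideanSpace ℝ (Fin n))).symm.continuous }

end aux

/-- The completed-square divergence identity proving the pointwise Hardy inequality
(Proposition 2.8): at every point of `U`,
`(y^q ⟪∇y,∇φ⟫ + b y^{q-1} ‖∇y‖² φ)² = y^{2q} (⟪∇y,∇φ⟫)²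
  + b(b-2q+1) y^{2q-2} ‖∇y‖⁴ φ² - 2b y^{2q-1} ⟪∇y,(∇²y)∇y⟫ φ²
  - b y^{2q-1} (Δy) ‖∇y‖² φ² + div(b y^{2q-1} ‖∇y‖² φ² ∇y)`. -/
theorem stmt_8 (n : ℕ) (U : Set (EuclideanSpace ℝ (Fin n))) (hU : IsOpen U)
    (q b : ℝ) (y φ : EuclideanSpace ℝ (Fin n) → ℝ)
    (hy : ContDiffOn ℝ 2 y U) (hypos : ∀ x ∈ U, 0 < y x)
    (hφ : ContDiffOn ℝ 1 φ U) :
    ∀ x ∈ U,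
      ((y x) ^ (q:ℝ) * (inner ℝ (gradient y x) (gradient φ x) : ℝ)
          + b * (y x) ^ (q - 1) * ‖gradient y x‖^2 * φ x)^2 =
        (y x) ^ (2*q) * (inner ℝ (gradient y x) (gradient φ x) : ℝ)^2
        + b * (b - 2*q + 1) * (y x) ^ (2*q - 2) * ‖gradient y x‖^4 * (φ x)^2
        - 2 * b * (y x) ^ (2*q - 1) *
            (fderiv ℝ (fun z => fderiv ℝ y z (gradient y x)) x (gradient y x)) * (φ x)^2
        - b * (y x) ^ (2*q - 1) * lap y x * ‖gradient y x‖^2 * (φ x)^2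
        + diverg (fun z =>
            (b * (y z) ^ (2*q - 1) * ‖gradient y z‖^2 * (φ z)^2) • gradient y z) x := by
  intro x hx
  have hUx : U ∈ nhds x := hU.mem_nhds hx
  have hy2 : ContDiffAt ℝ 2 y x := hy.contDiffAt hUx
  have hyd : DifferentiableAt ℝ y x := hy2.differentiableAt two_ne_zero
  have hfd : DifferentiableAt ℝ (fderiv ℝ y) x :=
    (hy2.fderiv_right (by norm_num : (1:WithTop ℕ∞) + 1 ≤ 2)).differentiableAt one_ne_zero
  have hφd : DifferentiableAt ℝ φ x := (hφ.contDiffAt hUx).differentiableAt one_ne_zero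
  have hYpos : 0 < y x := hypos x hx
  have hYne : y x ≠ 0 := ne_of_gt hYpos
  -- The isometry from the dual back to the space
  set T := hardyT n with hT
  have hgradfun : gradient y = fun z => T (fderiv ℝ y z) := rfl
  set H := fderiv ℝ (fderiv ℝ y) x with hHdef
  have hTinner : ∀ (L : EuclideanSpace ℝ (Fin n) →L[ℝ] ℝ) (v : EuclideanSpace ℝ (Fin n)),
      (inner ℝ (T L) v : ℝ) = L v := fun L v => InnerProductSpace.toDual_symm_apply
  have hgrad : HasFDerivAt (gradient y) (T.comp H) x := by
    rw [hgradfun]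
    exact T.hasFDerivAt.comp x hfd.hasFDerivAt
  have hgd : DifferentiableAt ℝ (gradient y) x := hgrad.differentiableAt
  have hDg : fderiv ℝ (gradient y) x = T.comp H := hgrad.fderiv
  set G := gradient y x with hG
  set P := gradient φ x with hP
  set I := (inner ℝ G P : ℝ) with hI
  -- Hessian applied formula
  have hHess : ∀ u v : EuclideanSpace ℝ (Fin n),
      fderiv ℝ (fun z => fderiv ℝ y z v) x u = H u v := by
    intro u v
    rw [fderiv_clm_apply hfd (differentiableAt_const v)]
    simp
    rfl
  -- derivative of y at x applied to G
  have hyG : fderiv ℝ y x G = ‖G‖^2 := by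
    rw [← inner_gradient y x G, ← hG, real_inner_self_eq_norm_sq]
  -- the norm-squared function
  have hNfun : (fun z => ‖gradient y z‖^2) =
      fun z => (inner ℝ (gradient y z) (gradient y z) : ℝ) :=
    funext fun z => (real_inner_self_eq_norm_sq _).symm
  have hNd : DifferentiableAt ℝ (fun z => ‖gradient y z‖^2) x := by
    rw [hNfun]; exact hgd.inner ℝ hgd
  have hNG : fderiv ℝ (fun z => ‖gradient y z‖^2) x G = 2 * H G G := by
    have h1 : (inner ℝ G (T (H G)) : ℝ) = H G G := by
      rw [real_inner_comm]; exact hTinner _ _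
    rw [hNfun, fderiv_inner_apply ℝ hgd hgd G, hDg, ← hG,
      show (T.comp H) G = T (H G) from rfl, h1, hTinner]
    ring
  -- the rpow function
  have hrd : DifferentiableAt ℝ (fun z => y z ^ (2*q - 1)) x :=
    hyd.rpow_const (Or.inl hYne)
  have hrG : fderiv ℝ (fun z => y z ^ (2*q - 1)) x G
      = (2*q - 1) * y x ^ (2*q - 1 - 1) * ‖G‖^2 := by
    rw [(hyd.hasFDerivAt.rpow_const (Or.inl hYne)).fderiv]
    rw [ContinuousLinearMap.smul_apply, smul_eq_mul, hyG]
  -- φ squared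
  have hφ2d : DifferentiableAt ℝ (fun z => (φ z)^2) x := hφd.pow 2
  have hφG : fderiv ℝ φ x G = I := by
    rw [← inner_gradient φ x G, ← hP, real_inner_comm]
  have hφ2G : fderiv ℝ (fun z => (φ z)^2) x G = 2 * φ x * I := by
    have h2 : (fun z => (φ z)^2) = fun z => φ z * φ z := funext fun z => sq (φ z)
    rw [h2, fderiv_fun_mul hφd hφd]
    simp only [ContinuousLinearMap.add_apply, ContinuousLinearMap.smul_apply,
      smul_eq_mul, hφG]
    ring
  -- the scalar factor g
  set g : EuclideanSpace ℝ (Fin n) → ℝ :=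
    fun z => b * (y z) ^ (2*q - 1) * ‖gradient y z‖^2 * (φ z)^2 with hgdef
  have hbr : DifferentiableAt ℝ (fun z => b * (y z) ^ (2*q - 1)) x :=
    (differentiableAt_const b).mul hrd
  have hbrN : DifferentiableAt ℝ
      (fun z => b * (y z) ^ (2*q - 1) * ‖gradient y z‖^2) x := hbr.mul hNd
  have hgdiff : DifferentiableAt ℝ g x := hbrN.mul hφ2d
  have hbrG : fderiv ℝ (fun z => b * (y z) ^ (2*q - 1)) x G
      = b * ((2*q - 1) * y x ^ (2*q - 1 - 1) * ‖G‖^2) := by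
    rw [fderiv_fun_mul (differentiableAt_const b) hrd, ContinuousLinearMap.add_apply,
      ContinuousLinearMap.smul_apply, ContinuousLinearMap.smul_apply,
      smul_eq_mul, smul_eq_mul, hrG, fderiv_const_apply]
    simp
  have hbrNG : fderiv ℝ (fun z => b * (y z) ^ (2*q - 1) * ‖gradient y z‖^2) x G
      = b * y x ^ (2*q - 1) * (2 * H G G)
        + ‖G‖^2 * (b * ((2*q - 1) * y x ^ (2*q - 1 - 1) * ‖G‖^2)) := by
    rw [fderiv_fun_mul hbr hNd, ContinuousLinearMap.add_apply,
      ContinuousLinearMap.smul_apply, ContinuousLinearMap.smul_apply,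
      smul_eq_mul, smul_eq_mul, hNG, hbrG, ← hG]
  have hgG : fderiv ℝ g x G
      = b * y x ^ (2*q - 1) * ‖G‖^2 * (2 * φ x * I)
        + (φ x)^2 * (b * y x ^ (2*q - 1) * (2 * H G G)
            + ‖G‖^2 * (b * ((2*q - 1) * y x ^ (2*q - 1 - 1) * ‖G‖^2))) := by
    rw [hgdef, fderiv_fun_mul hbrN hφ2d, ContinuousLinearMap.add_apply,
      ContinuousLinearMap.smul_apply, ContinuousLinearMap.smul_apply,
      smul_eq_mul, smul_eq_mul, hφ2G, hbrNG, ← hG]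
  -- the divergence
  have hV : fderiv ℝ (fun z => g z • gradient y z) x
      = g x • (T.comp H) + (fderiv ℝ g x).smulRight G := by
    rw [fderiv_fun_smul hgdiff hgd, hDg, hG]
  have hlap : lap y x = ∑ i, H (EuclideanSpace.single i 1) (EuclideanSpace.single i 1) := by
    unfold lap
    exact Finset.sum_congr rfl fun i _ => hHess _ _
  have hdiv : diverg (fun z => g z • gradient y z) x
      = fderiv ℝ g x G + g x * lap y x := by
    unfold diverg
    rw [hV]
    have step : ∀ i : Fin n,
        (g x • (T.comp H) + (fderiv ℝ g x).smulRight G) (EuclideanSpace.single i 1) i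
        = g x * H (EuclideanSpace.single i 1) (EuclideanSpace.single i 1)
          + fderiv ℝ g x (EuclideanSpace.single i 1) * G i := by
      intro i
      have happ : (T (H (EuclideanSpace.single i 1))) i
          = H (EuclideanSpace.single i 1) (EuclideanSpace.single i 1) := by
        have := hTinner (H (EuclideanSpace.single i 1)) (EuclideanSpace.single i 1)
        rwa [EuclideanSpace.inner_single_right, RCLike.conj_to_real, one_mul] at this
      rw [ContinuousLinearMap.add_apply, ContinuousLinearMap.smul_apply,
        ContinuousLinearMap.smulRight_apply, PiLp.add_apply, PiLp.smul_apply,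
        PiLp.smul_apply, smul_eq_mul, smul_eq_mul]
      rw [show (T.comp H) (EuclideanSpace.single i 1)
          = T (H (EuclideanSpace.single i 1)) from rfl, happ]
    rw [Finset.sum_congr rfl fun i _ => step i, Finset.sum_add_distrib,
      ← Finset.mul_sum, hlap]
    have hsum : ∑ i, fderiv ℝ g x (EuclideanSpace.single i 1) * G i
        = fderiv ℝ g x G := by
      conv_rhs => rw [euclid_decomp G]
      rw [map_sum]
      exact Finset.sum_congr rfl fun i _ => by
        rw [map_smul, smul_eq_mul, mul_comm]
    rw [hsum]
    ring
  -- put everything together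
  rw [hdiv, hgG, hHess G G]
  simp only [hgdef]
  -- rpow arithmetic
  have e1 : y x ^ (2*q) = y x ^ q * y x ^ q := by
    rw [show 2*q = q + q by ring, Real.rpow_add hYpos]
  have e2 : y x ^ (2*q - 2) = y x ^ (q-1) * y x ^ (q-1) := by
    rw [show 2*q - 2 = (q-1) + (q-1) by ring, Real.rpow_add hYpos]
  have e3 : y x ^ (2*q - 1) = y x ^ q * y x ^ (q-1) := by
    rw [show 2*q - 1 = q + (q-1) by ring, Real.rpow_add hYpos]
  have e4 : y x ^ (2*q - 1 - 1) = y x ^ (q-1) * y x ^ (q-1) := by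
    rw [show 2*q - 1 - 1 = (q-1) + (q-1) by ring, Real.rpow_add hYpos]
  rw [e1, e2, e3, e4]
  ring
end

section
/- Let U ⊆ ℝⁿ be open, let σ, κ be real numbers with σ = κ(1−κ), let x ∈ U, and let y, G : U → ℝ be twice differentiable at x with y(x) > 0, ‖∇y(x)‖ = 1, and ⟪∇y(x), ∇G(x)⟫ = 0. Then Δ(y^κ G)(x) + σ y(x)^{−2} · y(x)^κ G(x) = y(x)^κ ΔG(x) + κ y(x)^{κ−1} Δy(x) · G(x); in particular the inverse-square singularity cancels against the Dirichlet-branch profile y^κ. -/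
open Topology Filter

/-- The cancellation identity (equation (2.41)): if `σ = κ(1-κ)`, `y(x) > 0`,
`‖∇y(x)‖ = 1` and `⟪∇y(x), ∇G(x)⟫ = 0`, then
`Δ(y^κ G)(x) + σ y(x)⁻² (y(x)^κ G(x)) = y(x)^κ ΔG(x) + κ y(x)^{κ-1} Δy(x) G(x)`;
in particular the inverse-square singularity cancels against the Dirichlet branch `y^κ`. -/
theorem stmt_10 (n : ℕ) (U : Set (EuclideanSpace ℝ (Fin n))) (hU : IsOpen U)
    (σ κ : ℝ) (hσκ : σ = κ * (1 - κ))
    (x : EuclideanSpace ℝ (Fin n)) (hx : x ∈ U)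
    (y G : EuclideanSpace ℝ (Fin n) → ℝ)
    (hy : ContDiffAt ℝ 2 y x) (hG : ContDiffAt ℝ 2 G x)
    (hypos : 0 < y x) (heik : ‖gradient y x‖ = 1)
    (horth : (inner ℝ (gradient y x) (gradient G x) : ℝ) = 0) :
    lap (fun z => (y z) ^ (κ:ℝ) * G z) x + σ * ((y x)^2)⁻¹ * ((y x) ^ (κ:ℝ) * G x) =
      (y x) ^ (κ:ℝ) * lap G x + κ * (y x) ^ (κ - 1) * lap y x * G x := by
  classical
  have hy1 : DifferentiableAt ℝ y x := hy.differentiableAt (by norm_num)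
  have hG1 : DifferentiableAt ℝ G x := hG.differentiableAt (by norm_num)
  -- gradient components
  have hgrad : ∀ (f : EuclideanSpace ℝ (Fin n) → ℝ) (i : Fin n),
      fderiv ℝ f x (EuclideanSpace.single i 1) = gradient f x i := by
    intro f i
    have h : (inner ℝ (gradient f x) (EuclideanSpace.single i (1:ℝ)) : ℝ)
        = fderiv ℝ f x (EuclideanSpace.single i 1) := by
      rw [gradient]; exact InnerProductSpace.toDual_symm_apply
    rw [← h, EuclideanSpace.inner_single_right]
    simp
  -- sums of first-order products
  have hsum1 : ∑ i, fderiv ℝ y x (EuclideanSpace.single i 1)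
      * fderiv ℝ y x (EuclideanSpace.single i 1) = 1 := by
    have h : (inner ℝ (gradient y x) (gradient y x) : ℝ) = 1 := by
      rw [real_inner_self_eq_norm_sq, heik]; norm_num
    rw [PiLp.inner_apply] at h
    simp only [hgrad]
    simpa [sq] using h
  have hsum2 : ∑ i, fderiv ℝ y x (EuclideanSpace.single i 1)
      * fderiv ℝ G x (EuclideanSpace.single i 1) = 0 := by
    rw [← horth, PiLp.inner_apply]
    simp [hgrad, mul_comm]
  set f : EuclideanSpace ℝ (Fin n) → ℝ := fun z => y z ^ (κ:ℝ) * G z with hf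
  have hevent : ∀ᶠ z in 𝓝 x, 0 < y z ∧ DifferentiableAt ℝ y z ∧ DifferentiableAt ℝ G z := by
    have h0 : ∀ᶠ z in 𝓝 x, 0 < y z :=
      (hy.continuousAt : ContinuousAt y x).eventually (eventually_gt_nhds hypos)
    have h1 : ∀ᶠ z in 𝓝 x, DifferentiableAt ℝ y z :=
      (hy.eventually (by norm_num)).mono fun z hz => hz.differentiableAt (by norm_num)
    have h2 : ∀ᶠ z in 𝓝 x, DifferentiableAt ℝ G z :=
      (hG.eventually (by norm_num)).mono fun z hz => hz.differentiableAt (by norm_num)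
    filter_upwards [h0, h1, h2] with z a b c using ⟨a, b, c⟩
  -- first derivative formula in a neighbourhood
  have hfd : ∀ i : Fin n, (fun z => fderiv ℝ f z (EuclideanSpace.single i 1)) =ᶠ[𝓝 x]
      (fun z => y z ^ (κ:ℝ) * fderiv ℝ G z (EuclideanSpace.single i 1)
        + G z * (κ * y z ^ (κ - 1) * fderiv ℝ y z (EuclideanSpace.single i 1))) := by
    intro i
    filter_upwards [hevent] with z hz
    obtain ⟨hz0, hyz, hGz⟩ := hz
    have h1 : HasFDerivAt (fun w => y w ^ (κ:ℝ))
        ((κ * y z ^ (κ - 1)) • fderiv ℝ y z) z :=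
      hyz.hasFDerivAt.rpow_const (Or.inl hz0.ne')
    have h2 : HasFDerivAt f
        (y z ^ (κ:ℝ) • fderiv ℝ G z + G z • ((κ * y z ^ (κ - 1)) • fderiv ℝ y z)) z :=
      h1.mul hGz.hasFDerivAt
    rw [h2.fderiv]
    simp only [ContinuousLinearMap.add_apply, ContinuousLinearMap.coe_smul',
      Pi.smul_apply, smul_eq_mul]
  -- differentiability of the first-derivative functions at x
  have hDy : ∀ i : Fin n,
      DifferentiableAt ℝ (fun z => fderiv ℝ y z (EuclideanSpace.single i 1)) x := by
    intro i
    have h : ContDiffAt ℝ 1 (fderiv ℝ y) x := hy.fderiv_right (le_refl _)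
    exact (h.differentiableAt one_ne_zero).clm_apply (differentiableAt_const _)
  have hDG : ∀ i : Fin n,
      DifferentiableAt ℝ (fun z => fderiv ℝ G z (EuclideanSpace.single i 1)) x := by
    intro i
    have h : ContDiffAt ℝ 1 (fderiv ℝ G) x := hG.fderiv_right (le_refl _)
    exact (h.differentiableAt one_ne_zero).clm_apply (differentiableAt_const _)
  -- second derivative formula at x
  have key : ∀ i : Fin n,
      fderiv ℝ (fun z => fderiv ℝ f z (EuclideanSpace.single i 1)) x (EuclideanSpace.single i 1) =
        y x ^ (κ:ℝ) * fderiv ℝ (fun z => fderiv ℝ G z (EuclideanSpace.single i 1)) x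
          (EuclideanSpace.single i 1)
        + κ * y x ^ (κ - 1) * fderiv ℝ (fun z => fderiv ℝ y z (EuclideanSpace.single i 1)) x
          (EuclideanSpace.single i 1) * G x
        + κ * (κ - 1) * y x ^ (κ - 2)
          * (fderiv ℝ y x (EuclideanSpace.single i 1) * fderiv ℝ y x (EuclideanSpace.single i 1))
          * G x
        + 2 * κ * y x ^ (κ - 1)
          * (fderiv ℝ y x (EuclideanSpace.single i 1)
              * fderiv ℝ G x (EuclideanSpace.single i 1)) := by
    intro i
    rw [(hfd i).fderiv_eq]
    have hu : HasFDerivAt (fun z => y z ^ (κ:ℝ))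
        ((κ * y x ^ (κ - 1)) • fderiv ℝ y x) x :=
      hy1.hasFDerivAt.rpow_const (Or.inl hypos.ne')
    have hv : HasFDerivAt (fun z => fderiv ℝ G z (EuclideanSpace.single i 1))
        (fderiv ℝ (fun z => fderiv ℝ G z (EuclideanSpace.single i 1)) x) x := (hDG i).hasFDerivAt
    have hw : HasFDerivAt (fun z => fderiv ℝ y z (EuclideanSpace.single i 1))
        (fderiv ℝ (fun z => fderiv ℝ y z (EuclideanSpace.single i 1)) x) x := (hDy i).hasFDerivAt
    have hyk1 : HasFDerivAt (fun z => y z ^ (κ - 1))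
        (((κ - 1) * y x ^ (κ - 1 - 1)) • fderiv ℝ y x) x :=
      hy1.hasFDerivAt.rpow_const (Or.inl hypos.ne')
    have hck : HasFDerivAt (fun z => κ * y z ^ (κ - 1))
        (κ • (((κ - 1) * y x ^ (κ - 1 - 1)) • fderiv ℝ y x)) x := hyk1.const_mul κ
    have hprod : HasFDerivAt
        (fun z => y z ^ (κ:ℝ) * fderiv ℝ G z (EuclideanSpace.single i 1)
          + G z * (κ * y z ^ (κ - 1) * fderiv ℝ y z (EuclideanSpace.single i 1)))
        ((y x ^ (κ:ℝ) • fderiv ℝ (fun z => fderiv ℝ G z (EuclideanSpace.single i 1)) x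
            + fderiv ℝ G x (EuclideanSpace.single i 1) • ((κ * y x ^ (κ - 1)) • fderiv ℝ y x))
          + (G x • ((κ * y x ^ (κ - 1))
                • fderiv ℝ (fun z => fderiv ℝ y z (EuclideanSpace.single i 1)) x
              + fderiv ℝ y x (EuclideanSpace.single i 1)
                • (κ • (((κ - 1) * y x ^ (κ - 1 - 1)) • fderiv ℝ y x)))
            + (κ * y x ^ (κ - 1) * fderiv ℝ y x (EuclideanSpace.single i 1)) • fderiv ℝ G x)) x :=
      (hu.mul hv).add (hG1.hasFDerivAt.mul (hck.mul hw))
    rw [hprod.fderiv]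
    have h2 : (κ - 1 - 1 : ℝ) = κ - 2 := by ring
    simp only [ContinuousLinearMap.add_apply, ContinuousLinearMap.coe_smul',
      Pi.smul_apply, smul_eq_mul, h2]
    ring
  have hlap : lap f x = y x ^ (κ:ℝ) * lap G x
      + κ * y x ^ (κ - 1) * lap y x * G x
      + κ * (κ - 1) * y x ^ (κ - 2) * G x := by
    unfold lap
    rw [Finset.sum_congr rfl fun i _ => key i]
    rw [Finset.sum_add_distrib, Finset.sum_add_distrib, Finset.sum_add_distrib,
      ← Finset.mul_sum]
    rw [show (∑ i, κ * y x ^ (κ - 1)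
        * fderiv ℝ (fun z => fderiv ℝ y z (EuclideanSpace.single i 1)) x
          (EuclideanSpace.single i 1) * G x)
      = κ * y x ^ (κ - 1) * (∑ i, fderiv ℝ (fun z => fderiv ℝ y z (EuclideanSpace.single i 1)) x
          (EuclideanSpace.single i 1)) * G x by
        rw [Finset.mul_sum, Finset.sum_mul]]
    rw [show (∑ i, κ * (κ - 1) * y x ^ (κ - 2)
        * (fderiv ℝ y x (EuclideanSpace.single i 1) * fderiv ℝ y x (EuclideanSpace.single i 1))
        * G x)
      = κ * (κ - 1) * y x ^ (κ - 2) * (∑ i, fderiv ℝ y x (EuclideanSpace.single i 1)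
          * fderiv ℝ y x (EuclideanSpace.single i 1)) * G x by
        rw [Finset.mul_sum, Finset.sum_mul]]
    rw [show (∑ i, 2 * κ * y x ^ (κ - 1)
        * (fderiv ℝ y x (EuclideanSpace.single i 1) * fderiv ℝ G x (EuclideanSpace.single i 1)))
      = 2 * κ * y x ^ (κ - 1) * (∑ i, fderiv ℝ y x (EuclideanSpace.single i 1)
          * fderiv ℝ G x (EuclideanSpace.single i 1)) by
        rw [Finset.mul_sum]]
    rw [hsum1, hsum2]
    ring
  have hpow : ((y x)^2)⁻¹ * (y x) ^ (κ:ℝ) = (y x) ^ (κ - 2) := by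
    rw [Real.rpow_sub hypos]
    rw [show ((2:ℝ) : ℝ) = ((2:ℕ) : ℝ) by norm_num, Real.rpow_natCast]
    field_simp
  calc lap f x + σ * ((y x)^2)⁻¹ * ((y x) ^ (κ:ℝ) * G x)
      = y x ^ (κ:ℝ) * lap G x + κ * y x ^ (κ - 1) * lap y x * G x
        + κ * (κ - 1) * y x ^ (κ - 2) * G x
        + κ * (1 - κ) * (((y x)^2)⁻¹ * (y x) ^ (κ:ℝ)) * G x := by
        rw [hlap, hσκ]; ring
    _ = _ := by rw [hpow]; ring
end

section
/- Let U ⊆ ℝ × ℝⁿ be open, let f, u : U → ℝ be twice continuously differentiable, let λ ∈ ℝ, and set v := e^{−λf} u. Then at every point of U: e^{−λf} ( ∂_t u + Δu ) = ∂_t v + Δv + 2λ ⟪∇f, ∇v⟫ + λ ( ∂_t f + Δf + λ ‖∇f‖² ) v, where ∇ and Δ act only in the ℝⁿ (spatial) variables. -/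
open Filter

variable {n : ℕ}

/-- product with exponential: HasFDerivAt -/
lemma aux1 {F G : EuclideanSpace ℝ (Fin n) → ℝ} {lam : ℝ} {z : EuclideanSpace ℝ (Fin n)}
    (hF : DifferentiableAt ℝ F z) (hG : DifferentiableAt ℝ G z) :
    HasFDerivAt (fun w => Real.exp (-(lam * F w)) * G w)
      (Real.exp (-(lam * F z)) • fderiv ℝ G z
        + G z • (Real.exp (-(lam * F z)) • -(lam • fderiv ℝ F z))) z := by
  have h1 : HasFDerivAt (fun w => -(lam * F w)) (-(lam • fderiv ℝ F z)) z :=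
    (hF.hasFDerivAt.const_mul lam).neg
  exact h1.exp.mul hG.hasFDerivAt

lemma aux1' {F G : EuclideanSpace ℝ (Fin n) → ℝ} {lam : ℝ} {z : EuclideanSpace ℝ (Fin n)}
    (hF : DifferentiableAt ℝ F z) (hG : DifferentiableAt ℝ G z) (e : EuclideanSpace ℝ (Fin n)) :
    fderiv ℝ (fun w => Real.exp (-(lam * F w)) * G w) z e
      = Real.exp (-(lam * F z)) * (fderiv ℝ G z e - lam * (G z * fderiv ℝ F z e)) := by
  rw [(aux1 hF hG).fderiv]
  simp [ContinuousLinearMap.add_apply, ContinuousLinearMap.smul_apply,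
    ContinuousLinearMap.neg_apply]
  ring

lemma aux2 {F : EuclideanSpace ℝ (Fin n) → ℝ} {x : EuclideanSpace ℝ (Fin n)}
    (hF : ContDiffAt ℝ 2 F x) (e : EuclideanSpace ℝ (Fin n)) :
    DifferentiableAt ℝ (fun z => fderiv ℝ F z e) x := by
  have h := hF.fderiv_right (m := 1) (by norm_num)
  exact (h.differentiableAt (by norm_num)).clm_apply (differentiableAt_const e)

lemma aux3 {F G : EuclideanSpace ℝ (Fin n) → ℝ} {lam : ℝ} {x : EuclideanSpace ℝ (Fin n)}
    (hF : ContDiffAt ℝ 2 F x) (hG : ContDiffAt ℝ 2 G x) (e : EuclideanSpace ℝ (Fin n)) :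
    fderiv ℝ (fun z => fderiv ℝ G z e - lam * (G z * fderiv ℝ F z e)) x e
      = fderiv ℝ (fun z => fderiv ℝ G z e) x e
        - lam * (G x * fderiv ℝ (fun z => fderiv ℝ F z e) x e
            + fderiv ℝ F x e * fderiv ℝ G x e) := by
  have h1 := (aux2 hG e).hasFDerivAt
  have h2 := ((hG.differentiableAt (by norm_num)).hasFDerivAt.mul (aux2 hF e).hasFDerivAt)
  have h3 := h1.sub (h2.const_mul lam)
  rw [HasFDerivAt.fderiv (f := fun z => fderiv ℝ G z e - lam * (G z * fderiv ℝ F z e)) h3]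
  simp [ContinuousLinearMap.add_apply, ContinuousLinearMap.smul_apply]
  ring

lemma aux3d {F G : EuclideanSpace ℝ (Fin n) → ℝ} {lam : ℝ} {x : EuclideanSpace ℝ (Fin n)}
    (hF : ContDiffAt ℝ 2 F x) (hG : ContDiffAt ℝ 2 G x) (e : EuclideanSpace ℝ (Fin n)) :
    DifferentiableAt ℝ (fun z => fderiv ℝ G z e - lam * (G z * fderiv ℝ F z e)) x :=
  (aux2 hG e).sub (((hG.differentiableAt (by norm_num)).mul (aux2 hF e)).const_mul lam)



/-- The Carleman conjugation identity (equation (3.12)): if `v := e^{-λf} u`, then at every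
point of the open set `U ⊆ ℝ × ℝⁿ`,
`e^{-λf}(∂ₜu + Δu) = ∂ₜv + Δv + 2λ⟪∇f, ∇v⟫ + λ(∂ₜf + Δf + λ‖∇f‖²) v`,
where `∇` and `Δ` act only in the spatial variables. -/
theorem stmt_11 (n : ℕ) (U : Set (ℝ × EuclideanSpace ℝ (Fin n))) (hU : IsOpen U)
    (f u : ℝ → EuclideanSpace ℝ (Fin n) → ℝ)
    (hf : ContDiffOn ℝ 2 (fun q : ℝ × EuclideanSpace ℝ (Fin n) => f q.1 q.2) U)
    (hu : ContDiffOn ℝ 2 (fun q : ℝ × EuclideanSpace ℝ (Fin n) => u q.1 q.2) U)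
    (lam : ℝ)
    (v : ℝ → EuclideanSpace ℝ (Fin n) → ℝ)
    (hv : ∀ t x, v t x = Real.exp (-(lam * f t x)) * u t x) :
    ∀ t x, (t, x) ∈ U →
      Real.exp (-(lam * f t x)) * (deriv (fun s => u s x) t + lap (u t) x) =
        deriv (fun s => v s x) t + lap (v t) x
          + 2 * lam * (inner ℝ (gradient (f t) x) (gradient (v t) x) : ℝ)
          + lam * (deriv (fun s => f s x) t + lap (f t) x
              + lam * ‖gradient (f t) x‖^2) * v t x := by
  intro t x hmem
  set S : Set (EuclideanSpace ℝ (Fin n)) := {z | (t, z) ∈ U} with hSdef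
  have hS : IsOpen S := hU.preimage (by fun_prop)
  have hxS : x ∈ S := hmem
  -- spatial regularity
  have hFz : ∀ z ∈ S, ContDiffAt ℝ 2 (f t) z := by
    intro z hz
    exact (hf.contDiffAt (hU.mem_nhds hz)).comp z (ContDiffAt.prodMk contDiffAt_const contDiffAt_id)
  have hGz : ∀ z ∈ S, ContDiffAt ℝ 2 (u t) z := by
    intro z hz
    exact (hu.contDiffAt (hU.mem_nhds hz)).comp z (ContDiffAt.prodMk contDiffAt_const contDiffAt_id)
  have hFx := hFz x hxS
  have hGx := hGz x hxS
  -- time regularity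
  have hFt : ContDiffAt ℝ 2 (fun s => f s x) t :=
    (hf.contDiffAt (hU.mem_nhds hmem)).comp t (ContDiffAt.prodMk contDiffAt_id contDiffAt_const)
  have hGt : ContDiffAt ℝ 2 (fun s => u s x) t :=
    (hu.contDiffAt (hU.mem_nhds hmem)).comp t (ContDiffAt.prodMk contDiffAt_id contDiffAt_const)
  -- abbreviations
  set c := Real.exp (-(lam * f t x)) with hc
  set df := deriv (fun s => f s x) t with hdf
  set du := deriv (fun s => u s x) t with hdu
  set UU := u t x with hUU
  set e : Fin n → EuclideanSpace ℝ (Fin n) := fun i => EuclideanSpace.single i 1 with he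
  set Fi : Fin n → ℝ := fun i => fderiv ℝ (f t) x (e i) with hFi
  set Gi : Fin n → ℝ := fun i => fderiv ℝ (u t) x (e i) with hGi
  set FFi : Fin n → ℝ := fun i => fderiv ℝ (fun z => fderiv ℝ (f t) z (e i)) x (e i) with hFFi
  set GGi : Fin n → ℝ := fun i => fderiv ℝ (fun z => fderiv ℝ (u t) z (e i)) x (e i) with hGGi
  -- the function v t as a product
  have hvt : v t = fun z => Real.exp (-(lam * f t z)) * u t z := funext fun z => hv t z
  -- (1) time derivative of v
  have time_eq : deriv (fun s => v s x) t = c * du - lam * c * df * UU := by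
    have hdf' : HasDerivAt (fun s => f s x) df t :=
      (hFt.differentiableAt (by norm_num)).hasDerivAt
    have hdu' : HasDerivAt (fun s => u s x) du t :=
      (hGt.differentiableAt (by norm_num)).hasDerivAt
    have h1 : HasDerivAt (fun s => -(lam * f s x)) (-(lam * df)) t :=
      (hdf'.const_mul lam).neg
    have h3 := h1.exp.mul hdu'
    have hveq : (fun s => v s x) = fun s => Real.exp (-(lam * f s x)) * u s x :=
      funext fun s => hv s x
    rw [hveq, HasDerivAt.deriv (f := fun s => Real.exp (-(lam * f s x)) * u s x) h3]
    rw [hc, hdu, hUU]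
    ring
  -- first spatial derivatives of v
  have vder : ∀ z ∈ S, ∀ y : EuclideanSpace ℝ (Fin n),
      fderiv ℝ (v t) z y
        = Real.exp (-(lam * f t z)) * (fderiv ℝ (u t) z y - lam * (u t z * fderiv ℝ (f t) z y)) := by
    intro z hz y
    rw [hvt]
    exact aux1' ((hFz z hz).differentiableAt (by norm_num))
      ((hGz z hz).differentiableAt (by norm_num)) y
  have Vi : ∀ i, fderiv ℝ (v t) x (e i) = c * (Gi i - lam * (UU * Fi i)) :=
    fun i => vder x hxS (e i)
  -- (2) the Laplacian of v
  have lap_eq : lap (v t) x = ∑ i, (c * ((GGi i - lam * (UU * FFi i + Fi i * Gi i))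
      - lam * (Gi i - lam * (UU * Fi i)) * Fi i)) := by
    unfold lap
    refine Finset.sum_congr rfl fun i _ => ?_
    have heq : (fun z => fderiv ℝ (v t) z (e i)) =ᶠ[nhds x]
        (fun z => Real.exp (-(lam * f t z))
          * (fderiv ℝ (u t) z (e i) - lam * (u t z * fderiv ℝ (f t) z (e i)))) :=
      eventually_of_mem (hS.mem_nhds hxS) (fun z hz => vder z hz (e i))
    rw [show EuclideanSpace.single i (1:ℝ) = e i from rfl]
    rw [heq.fderiv_eq]
    rw [aux1' ((hFx).differentiableAt (by norm_num)) (aux3d hFx hGx (e i)) (e i)]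
    rw [aux3 hFx hGx (e i)]
    rw [hc, hUU, hFi, hGi, hFFi, hGGi]
    ring
  -- (3) gradient identities
  have hinner : ∀ (h : EuclideanSpace ℝ (Fin n) → ℝ) (y : EuclideanSpace ℝ (Fin n)),
      (inner ℝ (gradient h x) y : ℝ) = fderiv ℝ h x y :=
    fun h y => InnerProductSpace.toDual_symm_apply
  have grad_inner : (inner ℝ (gradient (f t) x) (gradient (v t) x) : ℝ)
      = ∑ i, Fi i * (c * (Gi i - lam * (UU * Fi i))) := by
    rw [← OrthonormalBasis.sum_inner_mul_inner (EuclideanSpace.basisFun (Fin n) ℝ)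
      (gradient (f t) x) (gradient (v t) x)]
    refine Finset.sum_congr rfl fun i _ => ?_
    rw [real_inner_comm (gradient (v t) x) ((EuclideanSpace.basisFun (Fin n) ℝ) i)]
    rw [hinner, hinner, EuclideanSpace.basisFun_apply]
    rw [show EuclideanSpace.single i (1:ℝ) = e i from rfl, Vi i]
  have grad_norm : ‖gradient (f t) x‖^2 = ∑ i, Fi i * Fi i := by
    rw [← real_inner_self_eq_norm_sq]
    rw [← OrthonormalBasis.sum_inner_mul_inner (EuclideanSpace.basisFun (Fin n) ℝ)
      (gradient (f t) x) (gradient (f t) x)]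
    refine Finset.sum_congr rfl fun i _ => ?_
    rw [real_inner_comm (gradient (f t) x) ((EuclideanSpace.basisFun (Fin n) ℝ) i)]
    rw [hinner, EuclideanSpace.basisFun_apply]
  -- assemble
  have hv0 : v t x = c * UU := hv t x
  have lapu : lap (u t) x = ∑ i, GGi i := rfl
  have lapf : lap (f t) x = ∑ i, FFi i := rfl
  rw [time_eq, lap_eq, grad_inner, grad_norm, hv0, lapu, lapf]
  -- linearize the sums
  set A := ∑ i, GGi i with hA
  set B := ∑ i, FFi i with hB
  set C := ∑ i, Fi i * Gi i with hC
  set D := ∑ i, Fi i * Fi i with hD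
  have s1 : ∑ i, (c * ((GGi i - lam * (UU * FFi i + Fi i * Gi i))
      - lam * (Gi i - lam * (UU * Fi i)) * Fi i))
      = c * A - (lam * c * UU) * B - (2 * lam * c) * C + (lam^2 * c * UU) * D := by
    rw [hA, hB, hC, hD, Finset.mul_sum, Finset.mul_sum, Finset.mul_sum, Finset.mul_sum,
      ← Finset.sum_sub_distrib, ← Finset.sum_sub_distrib, ← Finset.sum_add_distrib]
    exact Finset.sum_congr rfl fun i _ => by ring
  have s2 : ∑ i, Fi i * (c * (Gi i - lam * (UU * Fi i)))
      = c * C - (lam * c * UU) * D := by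
    rw [hC, hD, Finset.mul_sum, Finset.mul_sum, ← Finset.sum_sub_distrib]
    exact Finset.sum_congr rfl fun i _ => by ring
  rw [s1, s2]
  ring
end

section
/- Let H be a real normed vector space and K a real inner product space, let N : H → K and ℓ : H → ℝ be continuous linear maps, let ε > 0, and define J : H → ℝ by J(u) := ε‖u‖ + (1/2)‖N u‖² + ℓ(u). If φ ∈ H is a global minimizer of J, i.e. J(φ) ≤ J(u) for all u ∈ H, then for every u ∈ H: |⟪N φ, N u⟫ + ℓ(u)| ≤ ε ‖u‖. -/
/-- Abstract variational inequality from the first-variation argument for the HUM functional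
(Lemma 5.3): if `φ` is a global minimizer of `J(u) = ε‖u‖ + (1/2)‖N u‖² + ℓ(u)`,
then `|⟪N φ, N u⟫ + ℓ(u)| ≤ ε ‖u‖` for every `u`. -/
theorem stmt_16 {H K : Type*} [NormedAddCommGroup H] [NormedSpace ℝ H]
    [NormedAddCommGroup K] [InnerProductSpace ℝ K]
    (N : H →L[ℝ] K) (l : H →L[ℝ] ℝ) (ε : ℝ) (hε : 0 < ε)
    (J : H → ℝ) (hJ : ∀ u, J u = ε * ‖u‖ + (1/2) * ‖N u‖^2 + l u)
    (φ : H) (hφ : ∀ u, J φ ≤ J u) :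
    ∀ u : H, |(inner ℝ (N φ) (N u) : ℝ) + l u| ≤ ε * ‖u‖ := by
  have key : ∀ u : H, -(ε * ‖u‖) ≤ (inner ℝ (N φ) (N u) : ℝ) + l u := by
    intro u
    have hNu : (0:ℝ) ≤ ‖N u‖^2 := sq_nonneg _
    refine le_of_forall_pos_le_add ?_
    intro δ hδ
    set t : ℝ := min 1 (δ / (‖N u‖^2 + 1)) with ht
    have ht0 : 0 < t := lt_min one_pos (div_pos hδ (by positivity))
    have htδ : t * ‖N u‖^2 ≤ δ := by
      calc t * ‖N u‖^2 ≤ (δ / (‖N u‖^2 + 1)) * (‖N u‖^2 + 1) := by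
            apply mul_le_mul (min_le_right _ _) (by linarith) hNu
              (le_of_lt (div_pos hδ (by positivity)))
        _ = δ := div_mul_cancel₀ _ (by positivity)
    have h := hφ (φ + t • u)
    rw [hJ, hJ] at h
    have hnorm : ‖φ + t • u‖ ≤ ‖φ‖ + t * ‖u‖ := by
      calc ‖φ + t • u‖ ≤ ‖φ‖ + ‖t • u‖ := norm_add_le _ _
        _ = ‖φ‖ + t * ‖u‖ := by rw [norm_smul, Real.norm_of_nonneg ht0.le]
    have hmap : N (φ + t • u) = N φ + t • N u := by simp
    have hsq : ‖N (φ + t • u)‖^2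
        = ‖N φ‖^2 + 2 * t * (inner ℝ (N φ) (N u) : ℝ) + t^2 * ‖N u‖^2 := by
      rw [hmap, norm_add_sq_real, real_inner_smul_right, norm_smul,
        Real.norm_of_nonneg ht0.le]
      ring
    have hl : l (φ + t • u) = l φ + t * l u := by simp
    rw [hsq, hl] at h
    have h2 : 0 ≤ t * (ε * ‖u‖ + (inner ℝ (N φ) (N u) : ℝ) + l u + t/2 * ‖N u‖^2) := by
      nlinarith [mul_le_mul_of_nonneg_left hnorm hε.le]
    have hA : 0 ≤ ε * ‖u‖ + (inner ℝ (N φ) (N u) : ℝ) + l u + t/2 * ‖N u‖^2 :=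
      nonneg_of_mul_nonneg_right h2 ht0
    linarith
  intro u
  rw [abs_le]
  refine ⟨by linarith [key u], ?_⟩
  have h := key (-u)
  simp only [map_neg, inner_neg_right, norm_neg] at h
  linarith
end

section
/- Let H and K be real Hilbert spaces, let N : H → K be an injective continuous linear map, let ℓ : H → ℝ be a continuous linear functional, let ε > 0, and define J(u) := ε‖u‖ + (1/2)‖N u‖² + ℓ(u). Then J attains a global minimum: there exists φ ∈ H such that J(φ) ≤ J(u) for all u ∈ H. -/
open Metric InnerProductSpace NormedSpace

/-- A lower semicontinuous real function attains its minimum on a nonempty compact set. -/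
lemma lsc_exists_min' {α : Type*} [TopologicalSpace α] {s : Set α} (hs : IsCompact s)
    (hne : s.Nonempty) {f : α → ℝ} (hf : LowerSemicontinuous f) :
    ∃ x ∈ s, ∀ y ∈ s, f x ≤ f y := by
  by_contra h
  push_neg at h
  choose g hg hglt using h
  have hcov : s ⊆ ⋃ x : s, {z | f (g x x.2) < f z} := by
    intro x hx
    exact Set.mem_iUnion.2 ⟨⟨x, hx⟩, hglt x hx⟩
  obtain ⟨t, ht⟩ := hs.elim_finite_subcover _
    (fun x : s => hf.isOpen_preimage (f (g x x.2))) hcov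
  obtain ⟨x₀, hx₀⟩ := hne
  have htne : t.Nonempty := by
    rcases Set.mem_iUnion₂.1 (ht hx₀) with ⟨i, hi, _⟩
    exact ⟨i, hi⟩
  obtain ⟨i₀, hi₀t, hi₀min⟩ := t.exists_min_image (fun x : s => f (g x x.2)) htne
  rcases Set.mem_iUnion₂.1 (ht (hg i₀ i₀.2)) with ⟨j, hj, hjlt⟩
  exact absurd (hi₀min j hj) (not_le.2 hjlt)

/-- `x ↦ ‖A(Riesz⁻¹ x)‖` is lower semicontinuous on the weak-star dual of a Hilbert space. -/
lemma lsc_norm_comp' {H K : Type*} [NormedAddCommGroup H] [InnerProductSpace ℝ H]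
    [CompleteSpace H] [NormedAddCommGroup K] [InnerProductSpace ℝ K] [CompleteSpace K]
    (A : H →L[ℝ] K) :
    LowerSemicontinuous (fun x : WeakDual ℝ H =>
      ‖A ((toDual ℝ H).symm (WeakDual.toStrongDual x))‖) := by
  intro x₀ c hc
  set u₀ := (toDual ℝ H).symm (WeakDual.toStrongDual x₀) with hu₀
  rcases lt_or_ge c 0 with hc0 | hc0
  · exact Filter.Eventually.of_forall fun x => lt_of_lt_of_le hc0 (norm_nonneg _)
  · have hA0 : (0:ℝ) < ‖A u₀‖ := lt_of_le_of_lt hc0 hc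
    set w := ContinuousLinearMap.adjoint A (A u₀) with hw
    have key : ∀ x : WeakDual ℝ H,
        x w = ⟪A ((toDual ℝ H).symm (WeakDual.toStrongDual x)), A u₀⟫_ℝ := by
      intro x
      rw [← ContinuousLinearMap.adjoint_inner_right, ← hw, toDual_symm_apply]
      rfl
    have hx₀ : c * ‖A u₀‖ < x₀ w := by
      rw [key x₀, real_inner_self_eq_norm_mul_norm]
      exact mul_lt_mul_of_pos_right hc hA0
    have hopen : IsOpen {x : WeakDual ℝ H | c * ‖A u₀‖ < x w} :=
      isOpen_lt continuous_const (WeakDual.eval_continuous w)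
    filter_upwards [hopen.mem_nhds hx₀] with x hx
    have h2 : c * ‖A u₀‖ < ‖A ((toDual ℝ H).symm (WeakDual.toStrongDual x))‖ * ‖A u₀‖ :=
      lt_of_lt_of_le (key x ▸ hx) (real_inner_le_norm _ _)
    exact lt_of_mul_lt_mul_right h2 (norm_nonneg _)

/-- `x ↦ ℓ(Riesz⁻¹ x)` is continuous on the weak-star dual of a Hilbert space. -/
lemma cont_l_comp' {H : Type*} [NormedAddCommGroup H] [InnerProductSpace ℝ H]
    [CompleteSpace H] (l : H →L[ℝ] ℝ) :
    Continuous (fun x : WeakDual ℝ H => l ((toDual ℝ H).symm (WeakDual.toStrongDual x))) := by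
  have key : ∀ x : WeakDual ℝ H,
      l ((toDual ℝ H).symm (WeakDual.toStrongDual x)) = x ((toDual ℝ H).symm l) := by
    intro x
    conv_lhs => rw [show l = toDual ℝ H ((toDual ℝ H).symm l) from
      ((toDual ℝ H).apply_symm_apply l).symm]
    rw [toDual_apply_apply, real_inner_comm, toDual_symm_apply]
    rfl
  rw [funext key]
  exact WeakDual.eval_continuous _

lemma toNormedDual_toWeakDual' {E : Type*} [NormedAddCommGroup E] [NormedSpace ℝ E]
    (y : StrongDual ℝ E) : WeakDual.toStrongDual (StrongDual.toWeakDual y) = y := rfl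

/-- Existence of a minimizer of the HUM functional restricted to a closed ball, by weak
compactness (Banach–Alaoglu via Riesz representation) and weak lower semicontinuity. -/
lemma exists_min_ball' {H K : Type*} [NormedAddCommGroup H] [InnerProductSpace ℝ H]
    [CompleteSpace H] [NormedAddCommGroup K] [InnerProductSpace ℝ K] [CompleteSpace K]
    (N : H →L[ℝ] K) (l : H →L[ℝ] ℝ) (ε : ℝ) (hε : 0 < ε)
    (J : H → ℝ) (hJ : ∀ u, J u = ε * ‖u‖ + (1/2) * ‖N u‖^2 + l u)
    (R : ℝ) (hR : 0 ≤ R) :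
    ∃ φ : H, ‖φ‖ ≤ R ∧ ∀ u : H, ‖u‖ ≤ R → J φ ≤ J u := by
  set T := toDual ℝ H with hT
  set F : WeakDual ℝ H → ℝ := fun x => J (T.symm (WeakDual.toStrongDual x)) with hF
  have hlsc1 : LowerSemicontinuous
      (fun x : WeakDual ℝ H => ε * ‖T.symm (WeakDual.toStrongDual x)‖) := by
    have h0 := lsc_norm_comp' (ContinuousLinearMap.id ℝ H)
    simp only [ContinuousLinearMap.id_apply] at h0
    exact (continuous_const.mul continuous_id).comp_lowerSemicontinuous h0
      (fun a b hab => mul_le_mul_of_nonneg_left hab hε.le)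
  have hlsc2 : LowerSemicontinuous
      (fun x : WeakDual ℝ H => (1/2) * ‖N (T.symm (WeakDual.toStrongDual x))‖^2) := by
    have h0 := lsc_norm_comp' N
    have h1 : LowerSemicontinuous (fun x : WeakDual ℝ H =>
        (1/2) * (max ‖N (T.symm (WeakDual.toStrongDual x))‖ 0)^2) := by
      refine Continuous.comp_lowerSemicontinuous (g := fun t : ℝ => (1/2) * (max t 0)^2)
        (by continuity) h0 ?_
      intro a b hab
      have h2 : max a 0 ≤ max b 0 := max_le_max hab le_rfl
      have h3 : (0:ℝ) ≤ max a 0 := le_max_right _ _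
      nlinarith
    convert h1 using 2 with x
    rw [max_eq_left (norm_nonneg _)]
  have hFlsc : LowerSemicontinuous F := by
    have heq : F = fun x => ε * ‖T.symm (WeakDual.toStrongDual x)‖ +
        (1/2) * ‖N (T.symm (WeakDual.toStrongDual x))‖^2 +
        l (T.symm (WeakDual.toStrongDual x)) := by
      funext x
      exact hJ _
    rw [heq]
    exact (hlsc1.add hlsc2).add (cont_l_comp' l).lowerSemicontinuous
  set S : Set (WeakDual ℝ H) :=
    WeakDual.toStrongDual ⁻¹' closedBall (0 : StrongDual ℝ H) R with hS
  have hScomp : IsCompact S := WeakDual.isCompact_closedBall (0 : StrongDual ℝ H) R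
  have hSne : S.Nonempty := by
    refine ⟨0, ?_⟩
    simp [hS, hR]
  obtain ⟨x₀, hx₀S, hx₀min⟩ := lsc_exists_min' hScomp hSne hFlsc
  refine ⟨T.symm (WeakDual.toStrongDual x₀), ?_, ?_⟩
  · rw [T.symm.norm_map]
    simpa [hS] using hx₀S
  · intro u hu
    have hmem : StrongDual.toWeakDual (T u) ∈ S := by
      simp only [hS, Set.mem_preimage, toNormedDual_toWeakDual', mem_closedBall_zero_iff]
      rw [T.norm_map]
      exact hu
    have h5 := hx₀min _ hmem
    simpa only [hF, toNormedDual_toWeakDual', LinearIsometryEquiv.symm_apply_apply] using h5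

set_option maxHeartbeats 2000000 in
/-- Abstract form of Lemma 5.4 (existence of a minimizer of the HUM functional): if `N` is an
injective continuous linear map between Hilbert spaces, `ℓ` a continuous linear functional and
`ε > 0`, then `J(u) = ε‖u‖ + (1/2)‖N u‖² + ℓ(u)` attains a global minimum. -/
theorem stmt_18 {H K : Type*} [NormedAddCommGroup H] [InnerProductSpace ℝ H]
    [CompleteSpace H] [NormedAddCommGroup K] [InnerProductSpace ℝ K] [CompleteSpace K]
    (N : H →L[ℝ] K) (hN : Function.Injective N)
    (l : H →L[ℝ] ℝ) (ε : ℝ) (hε : 0 < ε)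
    (J : H → ℝ) (hJ : ∀ u, J u = ε * ‖u‖ + (1/2) * ‖N u‖^2 + l u) :
    ∃ φ : H, ∀ u : H, J φ ≤ J u := by
  by_contra hglob
  push_neg at hglob
  have hJ0 : J 0 = 0 := by simp [hJ]
  -- From ball minimizers of norm exactly n, produce unit vectors with small `‖N v‖` and
  -- `l v ≤ -ε`.
  have key : ∀ n : ℕ, 1 ≤ n → ∃ v : H, ‖v‖ ≤ 1 ∧ l v ≤ -ε ∧ ‖N v‖^2 ≤ 2*‖l‖/n := by
    intro n hn
    have hn0 : (0:ℝ) < n := by exact_mod_cast Nat.lt_of_lt_of_le Nat.zero_lt_one hn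
    obtain ⟨φ, hφle, hφmin⟩ := exists_min_ball' N l ε hε J hJ n hn0.le
    -- the ball minimizer must lie on the boundary, else it would be a local (hence global) min
    have hnorm : ‖φ‖ = n := by
      by_contra hne
      have hlt : ‖φ‖ < n := lt_of_le_of_ne hφle hne
      have glob : ∀ u, J φ ≤ J u := by
        intro u
        by_cases huφ : u = φ
        · rw [huφ]
        · set d := ‖u - φ‖ with hd'
          have hd : 0 < d := norm_pos_iff.2 (sub_ne_zero.2 huφ)
          set t := min 1 ((n - ‖φ‖)/d) with ht'
          have ht0 : 0 < t := lt_min one_pos (div_pos (by linarith) hd)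
          have ht1 : t ≤ 1 := min_le_left _ _
          set w := φ + t • (u - φ) with hw'
          have hwe : w = (1-t) • φ + t • u := by
            rw [hw', sub_smul, one_smul, smul_sub]
            abel
          have htd : t * d ≤ n - ‖φ‖ := by
            have := min_le_right 1 ((n - ‖φ‖)/d)
            calc t * d ≤ ((n - ‖φ‖)/d) * d := mul_le_mul_of_nonneg_right this hd.le
            _ = n - ‖φ‖ := by field_simp
          have hwball : ‖w‖ ≤ n := by
            calc ‖w‖ ≤ ‖φ‖ + ‖t • (u - φ)‖ := norm_add_le _ _
            _ = ‖φ‖ + t * d := by rw [norm_smul, Real.norm_eq_abs, abs_of_pos ht0]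
            _ ≤ n := by linarith
          have h1 : J φ ≤ J w := hφmin w hwball
          have nb : ‖w‖ ≤ (1-t)*‖φ‖ + t*‖u‖ := by
            rw [hwe]
            calc ‖(1-t) • φ + t • u‖ ≤ ‖(1-t) • φ‖ + ‖t • u‖ := norm_add_le _ _
            _ = (1-t)*‖φ‖ + t*‖u‖ := by
                rw [norm_smul, norm_smul, Real.norm_eq_abs, Real.norm_eq_abs,
                  abs_of_nonneg (by linarith : (0:ℝ) ≤ 1 - t), abs_of_pos ht0]
          have na : ‖N w‖ ≤ (1-t)*‖N φ‖ + t*‖N u‖ := by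
            rw [hwe]
            calc ‖N ((1-t) • φ + t • u)‖ = ‖(1-t) • N φ + t • N u‖ := by
                  rw [map_add, map_smul, map_smul]
            _ ≤ ‖(1-t) • N φ‖ + ‖t • N u‖ := norm_add_le _ _
            _ = (1-t)*‖N φ‖ + t*‖N u‖ := by
                rw [norm_smul, norm_smul, Real.norm_eq_abs, Real.norm_eq_abs,
                  abs_of_nonneg (by linarith : (0:ℝ) ≤ 1 - t), abs_of_pos ht0]
          have lc : l w = (1-t)*(l φ) + t*(l u) := by
            rw [hwe, map_add, map_smul, map_smul, smul_eq_mul, smul_eq_mul]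
          have hsq : ‖N w‖^2 ≤ (1-t)*‖N φ‖^2 + t*‖N u‖^2 := by
            have e1 : ‖N w‖^2 ≤ ((1-t)*‖N φ‖ + t*‖N u‖)^2 :=
              pow_le_pow_left₀ (norm_nonneg _) na 2
            have e2 : ((1-t)*‖N φ‖ + t*‖N u‖)^2 ≤ (1-t)*‖N φ‖^2 + t*‖N u‖^2 := by
              nlinarith [mul_nonneg (mul_nonneg ht0.le (by linarith : (0:ℝ) ≤ 1 - t))
                (sq_nonneg (‖N φ‖ - ‖N u‖))]
            linarith
          have hεw : ε * ‖w‖ ≤ ε * ((1-t)*‖φ‖ + t*‖u‖) := mul_le_mul_of_nonneg_left nb hε.le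
          have hJw : J w ≤ (1-t)*(J φ) + t*(J u) := by
            rw [hJ w, hJ φ, hJ u]
            nlinarith [hεw, hsq, lc]
          nlinarith [h1, hJw, ht0]
      obtain ⟨u, hu⟩ := hglob φ
      exact absurd (glob u) (not_le.2 hu)
    have hJφ : ε * n + (1/2) * ‖N φ‖^2 + l φ ≤ 0 := by
      have := hφmin 0 (by simpa using hn0.le)
      rw [hJ0, hJ φ, hnorm] at this
      exact this
    have habs : -(l φ) ≤ ‖l‖ * n := by
      have h2 : |l φ| ≤ ‖l‖ * ‖φ‖ := by
        have := l.le_opNorm φ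
        simpa [Real.norm_eq_abs] using this
      rw [hnorm] at h2
      exact le_trans (neg_le_abs _) h2
    refine ⟨(n:ℝ)⁻¹ • φ, ?_, ?_, ?_⟩
    · rw [norm_smul, Real.norm_eq_abs, abs_of_pos (inv_pos.2 hn0), hnorm,
        inv_mul_cancel₀ hn0.ne']
    · have h2 : l φ ≤ -(ε*n) := by nlinarith [sq_nonneg ‖N φ‖]
      have h3 : (n:ℝ)⁻¹ * (l φ) ≤ (n:ℝ)⁻¹ * (-(ε*n)) :=
        mul_le_mul_of_nonneg_left h2 (inv_pos.2 hn0).le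
      rw [map_smul, smul_eq_mul]
      calc (n:ℝ)⁻¹ * (l φ) ≤ (n:ℝ)⁻¹ * (-(ε*n)) := h3
      _ = -ε := by field_simp
    · have hNφ : ‖N φ‖^2 ≤ 2*‖l‖*n := by nlinarith
      have hNv : ‖N ((n:ℝ)⁻¹ • φ)‖ = (n:ℝ)⁻¹ * ‖N φ‖ := by
        rw [map_smul, norm_smul, Real.norm_eq_abs, abs_of_pos (inv_pos.2 hn0)]
      rw [hNv, show (2*‖l‖/(n:ℝ)) = ((n:ℝ)⁻¹)^2 * (2*‖l‖*n) by field_simp]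
      calc ((n:ℝ)⁻¹ * ‖N φ‖)^2 = ((n:ℝ)⁻¹)^2 * ‖N φ‖^2 := by ring
      _ ≤ ((n:ℝ)⁻¹)^2 * (2*‖l‖*n) := mul_le_mul_of_nonneg_left hNφ (sq_nonneg _)
  -- Now minimize `‖N ·‖` on the weakly compact set `{‖v‖ ≤ 1, l v ≤ -ε}` and use injectivity.
  set T := toDual ℝ H with hT
  set C : Set (WeakDual ℝ H) :=
    (WeakDual.toStrongDual ⁻¹' closedBall (0 : StrongDual ℝ H) 1) ∩
      {x | l (T.symm (WeakDual.toStrongDual x)) ≤ -ε} with hC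
  have hCcomp : IsCompact C := (WeakDual.isCompact_closedBall (0 : StrongDual ℝ H) 1).inter_right
    (isClosed_le (cont_l_comp' l) continuous_const)
  have hmemC : ∀ v : H, ‖v‖ ≤ 1 → l v ≤ -ε → StrongDual.toWeakDual (T v) ∈ C := by
    intro v hv1 hv2
    constructor
    · simp only [Set.mem_preimage, toNormedDual_toWeakDual', mem_closedBall_zero_iff]
      rw [T.norm_map]
      exact hv1
    · simp only [Set.mem_setOf_eq, toNormedDual_toWeakDual',
        LinearIsometryEquiv.symm_apply_apply]
      exact hv2
  have hCne : C.Nonempty := by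
    obtain ⟨v, hv1, hv2, _⟩ := key 1 le_rfl
    exact ⟨_, hmemC v hv1 hv2⟩
  obtain ⟨x₀, hx₀C, hx₀min⟩ := lsc_exists_min' hCcomp hCne (lsc_norm_comp' N)
  set v₀ := T.symm (WeakDual.toStrongDual x₀) with hv₀
  have hzero : ‖N v₀‖^2 ≤ 0 := by
    by_contra hpos
    push_neg at hpos
    obtain ⟨n, hngt⟩ := exists_nat_gt (max 1 (2*‖l‖/‖N v₀‖^2))
    have hn1 : 1 ≤ n := by
      have := lt_of_le_of_lt (le_max_left 1 _) hngt
      exact_mod_cast this.le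
    have hn0 : (0:ℝ) < n := by exact_mod_cast Nat.lt_of_lt_of_le Nat.zero_lt_one hn1
    obtain ⟨v, hv1, hv2, hv3⟩ := key n hn1
    have hmin := hx₀min _ (hmemC v hv1 hv2)
    simp only [hT, toNormedDual_toWeakDual', LinearIsometryEquiv.symm_apply_apply] at hmin
    have hsq : ‖N v₀‖^2 ≤ ‖N v‖^2 := by
      have := hmin
      nlinarith [norm_nonneg (N v₀), norm_nonneg (N v)]
    have hlesschain : ‖N v₀‖^2 ≤ 2*‖l‖/n := le_trans hsq hv3
    have hgt : 2*‖l‖/‖N v₀‖^2 < n := lt_of_le_of_lt (le_max_right 1 _) hngt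
    have : 2*‖l‖/(n:ℝ) < ‖N v₀‖^2 := by
      rw [div_lt_iff₀ hn0]
      calc 2*‖l‖ = (2*‖l‖/‖N v₀‖^2) * ‖N v₀‖^2 := by rw [div_mul_cancel₀ _ hpos.ne']
      _ < n * ‖N v₀‖^2 := mul_lt_mul_of_pos_right hgt hpos
      _ = ‖N v₀‖^2 * n := by ring
    linarith
  have hNv₀ : N v₀ = 0 := by
    have : ‖N v₀‖ = 0 := by nlinarith [norm_nonneg (N v₀)]
    exact norm_eq_zero.1 this
  have hv₀0 : v₀ = 0 := hN (by rw [hNv₀, map_zero])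
  have h9 : l (T.symm (WeakDual.toStrongDual x₀)) ≤ -ε := hx₀C.2
  rw [← hv₀, hv₀0, map_zero] at h9
  linarith
end
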